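/- arXiv:2205.15695 — 2 statements merged into one kernel-verified Lean document; each statement's English description precedes it below -/
import Mathlib

section
/- Let K ≥ 1 and n ≥ 1, and let 0 < λ_1 ≤ λ_2 ≤ … ≤ λ_K. For each type k let P_1^k, …, P_n^k be mutually independent random variables, with P_i^k exponentially distributed with mean λ_k. Let C_FTPP = Σ_{a=1}^N Σ_{b=1}^a P_b where P_1, …, P_N (N = nK) lists all jobs in nondecreasing order of their means, and let C_RR = Σ_j P_j + 2·Σ_{1≤i<j≤N} min(P_i, P_j). Then E[C_FTPP] ≤ E[C_RR]. -/
open MeasureTheory ProbabilityTheory Finset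

lemma expMeasure_Ioi' {r t : ℝ} (hr : 0 < r) (ht : 0 ≤ t) :
    expMeasure r (Set.Ioi t) = ENNReal.ofReal (Real.exp (-(r * t))) := by
  have : IsProbabilityMeasure (expMeasure r) := isProbabilityMeasure_expMeasure hr
  have hIic : expMeasure r (Set.Iic t) = ENNReal.ofReal (1 - Real.exp (-(r * t))) := by
    rw [← ofReal_cdf (expMeasure r) t]
    have := cdf_expMeasure_eq hr t
    rw [this, if_pos ht]
  have hcompl : Set.Ioi t = (Set.Iic t)ᶜ := by simp
  rw [hcompl, measure_compl measurableSet_Iic (measure_ne_top _ _), hIic, measure_univ]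
  rw [← ENNReal.ofReal_one, ← ENNReal.ofReal_sub _ (by
    have := Real.exp_le_one_iff.2 (by nlinarith : -(r*t) ≤ 0); linarith)]
  ring_nf

lemma lintegral_exp_tail' {b : ℝ} (hb : 0 < b) :
    ∫⁻ t in Set.Ioi (0:ℝ), ENNReal.ofReal (Real.exp (-(b * t))) = ENNReal.ofReal (1 / b) := by
  have hint : IntegrableOn (fun x : ℝ => Real.exp (-b * x)) (Set.Ioi 0) :=
    exp_neg_integrableOn_Ioi 0 hb
  have h1 : ∫⁻ t in Set.Ioi (0:ℝ), ENNReal.ofReal (Real.exp (-(b * t)))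
      = ENNReal.ofReal (∫ t in Set.Ioi (0:ℝ), Real.exp (-b * t)) := by
    rw [ofReal_integral_eq_lintegral_ofReal hint
      (Filter.Eventually.of_forall fun x => (Real.exp_pos _).le)]
    simp only [neg_mul]
  rw [h1]
  congr 1
  have h2 := integral_exp_neg_mul_rpow one_pos hb
  rw [show ∫ t in Set.Ioi (0:ℝ), Real.exp (-b * t) = ∫ x in Set.Ioi (0:ℝ), Real.exp (-b * x ^ (1:ℝ))
    from setIntegral_congr_fun measurableSet_Ioi fun x _ => by rw [Real.rpow_one], h2]
  norm_num at h2 ⊢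
  rw [Real.rpow_neg_one]

section RV
variable {Ω : Type*} [MeasurableSpace Ω] (μ : Measure Ω) [IsProbabilityMeasure μ]

lemma tailX {X : Ω → ℝ} {r : ℝ} (hr : 0 < r) (hm : Measurable X)
    (hd : Measure.map X μ = expMeasure r) {t : ℝ} (ht : 0 ≤ t) :
    μ {ω | t < X ω} = ENNReal.ofReal (Real.exp (-(r * t))) := by
  have h : {ω | t < X ω} = X ⁻¹' Set.Ioi t := rfl
  rw [h, ← Measure.map_apply hm measurableSet_Ioi, hd, expMeasure_Ioi' hr ht]

lemma nonnegX {X : Ω → ℝ} {r : ℝ} (hr : 0 < r) (hm : Measurable X)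
    (hd : Measure.map X μ = expMeasure r) : 0 ≤ᵐ[μ] X := by
  have h0 : μ {ω | 0 < X ω} = 1 := by
    rw [tailX μ hr hm hd le_rfl]; simp
  have hc : μ ({ω | 0 < X ω}ᶜ) = 0 := by
    rw [measure_compl (measurableSet_lt measurable_const hm) (measure_ne_top _ _), h0,
      measure_univ, tsub_self]
  rw [Filter.EventuallyLE, ae_iff]
  refine measure_mono_null ?_ hc
  intro ω hω
  simp only [Set.mem_setOf_eq, Pi.zero_apply, not_le] at hω
  simp only [Set.mem_compl_iff, Set.mem_setOf_eq, not_lt]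
  exact hω.le

lemma meanX {X : Ω → ℝ} {r : ℝ} (hr : 0 < r) (hm : Measurable X)
    (hd : Measure.map X μ = expMeasure r) :
    ∫⁻ ω, ENNReal.ofReal (X ω) ∂μ = ENNReal.ofReal (1 / r) := by
  rw [lintegral_eq_lintegral_meas_lt μ (nonnegX μ hr hm hd) hm.aemeasurable,
    ← lintegral_exp_tail' hr]
  apply setLIntegral_congr_fun measurableSet_Ioi
  exact fun t ht => tailX μ hr hm hd (le_of_lt ht)

lemma minX {X Y : Ω → ℝ} {r s : ℝ} (hr : 0 < r) (hs : 0 < s)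
    (hmX : Measurable X) (hmY : Measurable Y)
    (hdX : Measure.map X μ = expMeasure r) (hdY : Measure.map Y μ = expMeasure s)
    (hXY : IndepFun X Y μ) :
    ∫⁻ ω, ENNReal.ofReal (min (X ω) (Y ω)) ∂μ = ENNReal.ofReal (1 / (r + s)) := by
  have hnn : 0 ≤ᵐ[μ] fun ω => min (X ω) (Y ω) := by
    filter_upwards [nonnegX μ hr hmX hdX, nonnegX μ hs hmY hdY] with ω h1 h2
    exact le_min h1 h2
  rw [lintegral_eq_lintegral_meas_lt μ hnn (hmX.min hmY).aemeasurable,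
    ← lintegral_exp_tail' (by positivity : (0:ℝ) < r + s)]
  apply setLIntegral_congr_fun measurableSet_Ioi
  refine fun t ht => ?_
  beta_reduce
  have hset : {a | t < min (X a) (Y a)} = X ⁻¹' Set.Ioi t ∩ Y ⁻¹' Set.Ioi t := by
    ext a; simp [lt_min_iff]
  rw [hset, hXY.measure_inter_preimage_eq_mul _ _ measurableSet_Ioi measurableSet_Ioi,
    ← Measure.map_apply hmX measurableSet_Ioi, ← Measure.map_apply hmY measurableSet_Ioi,
    hdX, hdY, expMeasure_Ioi' hr ht.le, expMeasure_Ioi' hs ht.le,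
    ← ENNReal.ofReal_mul (Real.exp_pos _).le, ← Real.exp_add]
  congr 2
  ring

end RV

/-- `E[C_FTPP] ≤ E[C_RR]` for `K` job types with `n` independent exponential jobs
per type. -/
theorem stmt_3
    {Ω : Type*} [MeasurableSpace Ω] (μ : Measure Ω) [IsProbabilityMeasure μ]
    (K n : ℕ) (hK : 1 ≤ K) (hn : 1 ≤ n)
    (lam : Fin K → ℝ) (hpos : ∀ k, 0 < lam k) (hmono : Monotone lam)
    (P : Fin K → Fin n → Ω → ℝ)
    (hmeas : ∀ k i, Measurable (P k i))
    (hdist : ∀ k i, Measure.map (P k i) μ = expMeasure (1 / lam k))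
    (hindep : iIndepFun
      (fun p : Fin K × Fin n => P p.1 p.2) μ)
    (e : Fin (n * K) ≃ Fin K × Fin n)
    -- the enumeration lists the jobs in nondecreasing order of their means
    (he : ∀ a b : Fin (n * K), a ≤ b → lam (e a).1 ≤ lam (e b).1)
    (CFTPP CRR : Ω → ℝ)
    (hCFTPP : ∀ ω, CFTPP ω =
      ∑ a : Fin (n * K), ∑ b ∈ Finset.Iic a, P (e b).1 (e b).2 ω)
    (hCRR : ∀ ω, CRR ω =
      (∑ j : Fin (n * K), P (e j).1 (e j).2 ω) +
      2 * ∑ i : Fin (n * K), ∑ j ∈ Finset.Ioi i,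
        min (P (e i).1 (e i).2 ω) (P (e j).1 (e j).2 ω)) :
    ∫ ω, CFTPP ω ∂μ ≤ ∫ ω, CRR ω ∂μ := by
  set Q : Fin (n * K) → Ω → ℝ := fun j => P (e j).1 (e j).2 with hQ
  set L : Fin (n * K) → ℝ := fun j => lam (e j).1 with hLdef
  have hLpos : ∀ j, 0 < L j := fun j => hpos _
  have hrpos : ∀ j, (0:ℝ) < 1 / L j := fun j => by have := hLpos j; positivity
  have hQm : ∀ j, Measurable (Q j) := fun j => hmeas _ _
  have hQd : ∀ j, Measure.map (Q j) μ = expMeasure (1 / L j) := fun j => hdist _ _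
  have hQmean : ∀ j, ∫⁻ ω, ENNReal.ofReal (Q j ω) ∂μ = ENNReal.ofReal (L j) := by
    intro j
    rw [meanX μ (hrpos j) (hQm j) (hQd j), one_div_one_div]
  have hQom : ∀ b, Measurable fun ω => ENNReal.ofReal (Q b ω) :=
    fun b => ENNReal.measurable_ofReal.comp (hQm b)
  have hQnn : ∀ᵐ ω ∂μ, ∀ j, 0 ≤ Q j ω := by
    rw [ae_all_iff]
    exact fun j => nonnegX μ (hrpos j) (hQm j) (hQd j)
  have hindepQ : ∀ i j : Fin (n * K), i ≠ j → IndepFun (Q i) (Q j) μ := fun i j hij =>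
    hindep.indepFun (fun h => hij (e.injective h))
  set M : Fin (n * K) → Fin (n * K) → ENNReal :=
    fun i j => ∫⁻ ω, ENNReal.ofReal (min (Q i ω) (Q j ω)) ∂μ with hMdef
  have hMin : ∀ i j : Fin (n * K), i ≠ j →
      M i j = ENNReal.ofReal (1 / (1 / L i + 1 / L j)) := fun i j hij =>
    minX μ (hrpos i) (hrpos j) (hQm i) (hQm j) (hQd i) (hQd j) (hindepQ i j hij)
  have hMinLB : ∀ i j : Fin (n * K), i < j → ENNReal.ofReal (L i / 2) ≤ M i j := by
    intro i j hij
    rw [hMin i j hij.ne]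
    apply ENNReal.ofReal_le_ofReal
    have hLij : L i ≤ L j := he i j hij.le
    have hLi := hLpos i
    have hLj := hLpos j
    rw [div_le_div_iff₀ two_pos (by positivity)]
    have h1 : L i * (1 / L i + 1 / L j) = 1 + L i / L j := by field_simp
    rw [h1]
    have h2 : L i / L j ≤ 1 := (div_le_one hLj).2 hLij
    linarith
  have hMinUB : ∀ i j : Fin (n * K), M i j ≤ ENNReal.ofReal (L i) := by
    intro i j
    rw [← hQmean i]
    exact lintegral_mono fun ω => ENNReal.ofReal_le_ofReal (min_le_left _ _)
  -- lintegral of CFTPP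
  have hF : ∫⁻ ω, ENNReal.ofReal (CFTPP ω) ∂μ
      = ∑ a : Fin (n * K), ∑ b ∈ Finset.Iic a, ENNReal.ofReal (L b) := by
    have h1 : ∫⁻ ω, ENNReal.ofReal (CFTPP ω) ∂μ
        = ∫⁻ ω, ∑ a : Fin (n * K), ∑ b ∈ Finset.Iic a, ENNReal.ofReal (Q b ω) ∂μ := by
      apply lintegral_congr_ae
      filter_upwards [hQnn] with ω hω
      rw [hCFTPP ω,
        ENNReal.ofReal_sum_of_nonneg fun a _ => Finset.sum_nonneg fun b _ => hω b]
      exact Finset.sum_congr rfl fun a _ =>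
        ENNReal.ofReal_sum_of_nonneg fun b _ => hω b
    rw [h1, lintegral_finset_sum _ fun a _ =>
      Finset.measurable_sum _ fun b _ => hQom b]
    refine Finset.sum_congr rfl fun a _ => ?_
    rw [lintegral_finset_sum _ fun b _ => hQom b]
    exact Finset.sum_congr rfl fun b _ => hQmean b
  -- lintegral of CRR
  have hR : ∫⁻ ω, ENNReal.ofReal (CRR ω) ∂μ
      = (∑ j : Fin (n * K), ENNReal.ofReal (L j)) +
        2 * ∑ i : Fin (n * K), ∑ j ∈ Finset.Ioi i, M i j := by
    have h1 : ∫⁻ ω, ENNReal.ofReal (CRR ω) ∂μ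
        = ∫⁻ ω, ((∑ j : Fin (n * K), ENNReal.ofReal (Q j ω)) +
            2 * ∑ i : Fin (n * K), ∑ j ∈ Finset.Ioi i,
              ENNReal.ofReal (min (Q i ω) (Q j ω))) ∂μ := by
      apply lintegral_congr_ae
      filter_upwards [hQnn] with ω hω
      have hmn : ∀ i j : Fin (n * K), (0:ℝ) ≤ min (Q i ω) (Q j ω) :=
        fun i j => le_min (hω i) (hω j)
      have hA : (0:ℝ) ≤ ∑ j : Fin (n * K), Q j ω := Finset.sum_nonneg fun j _ => hω j
      have hB : (0:ℝ) ≤ ∑ i : Fin (n * K), ∑ j ∈ Finset.Ioi i, min (Q i ω) (Q j ω) :=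
        Finset.sum_nonneg fun i _ => Finset.sum_nonneg fun j _ => hmn i j
      rw [hCRR ω, ENNReal.ofReal_add hA (by positivity),
        ENNReal.ofReal_mul (by norm_num : (0:ℝ) ≤ 2),
        ENNReal.ofReal_sum_of_nonneg fun j _ => hω j,
        ENNReal.ofReal_sum_of_nonneg fun i _ => Finset.sum_nonneg fun j _ => hmn i j]
      congr 1
      rw [show ENNReal.ofReal 2 = (2:ENNReal) by norm_num]
      congr 1
      exact Finset.sum_congr rfl fun i _ =>
        ENNReal.ofReal_sum_of_nonneg fun j _ => hmn i j
    have hmeasA : Measurable fun ω => ∑ j : Fin (n * K), ENNReal.ofReal (Q j ω) :=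
      Finset.measurable_sum _ fun j _ => hQom j
    have hmeasB : ∀ i j : Fin (n * K),
        Measurable fun ω => ENNReal.ofReal (min (Q i ω) (Q j ω)) :=
      fun i j => ENNReal.measurable_ofReal.comp ((hQm i).min (hQm j))
    rw [h1, lintegral_add_left hmeasA]
    congr 1
    · rw [lintegral_finset_sum _ fun j _ => hQom j]
      exact Finset.sum_congr rfl fun j _ => hQmean j
    rw [lintegral_const_mul _ (Finset.measurable_sum _ fun i _ =>
      Finset.measurable_sum _ fun j _ => hmeasB i j)]
    congr 1
    rw [lintegral_finset_sum _ fun i _ => Finset.measurable_sum _ fun j _ => hmeasB i j]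
    exact Finset.sum_congr rfl fun i _ =>
      lintegral_finset_sum _ fun j _ => hmeasB i j
  -- combinatorial identity
  have hIci : ∀ b : Fin (n * K), Finset.Ici b = insert b (Finset.Ioi b) := by
    intro b; ext x
    simp only [Finset.mem_Ici, Finset.mem_insert, Finset.mem_Ioi]
    constructor
    · intro h
      rcases eq_or_lt_of_le h with h | h
      · exact Or.inl h.symm
      · exact Or.inr h
    · rintro (rfl | h)
      · exact le_rfl
      · exact h.le
  have hcomb : (∑ a : Fin (n * K), ∑ b ∈ Finset.Iic a, ENNReal.ofReal (L b))
      = (∑ j : Fin (n * K), ENNReal.ofReal (L j)) +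
        ∑ i : Fin (n * K), ∑ j ∈ Finset.Ioi i, ENNReal.ofReal (L i) := by
    rw [Finset.sum_comm' (s' := Finset.Ici) (t' := Finset.univ)
      (fun x y => by simp [Finset.mem_Iic, Finset.mem_Ici])]
    rw [← Finset.sum_add_distrib]
    refine Finset.sum_congr rfl fun b _ => ?_
    rw [hIci b, Finset.sum_insert Finset.notMem_Ioi_self]
  -- main inequality at the lintegral level
  have hle : ∫⁻ ω, ENNReal.ofReal (CFTPP ω) ∂μ ≤ ∫⁻ ω, ENNReal.ofReal (CRR ω) ∂μ := by
    rw [hF, hR, hcomb]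
    gcongr
    rw [Finset.mul_sum]
    refine Finset.sum_le_sum fun i _ => ?_
    rw [Finset.mul_sum]
    refine Finset.sum_le_sum fun j hj => ?_
    have hlb := hMinLB i j (Finset.mem_Ioi.mp hj)
    calc ENNReal.ofReal (L i) = 2 * ENNReal.ofReal (L i / 2) := by
          rw [show ((2:ENNReal)) = ENNReal.ofReal 2 by norm_num,
            ← ENNReal.ofReal_mul (by norm_num)]
          congr 1
          ring
      _ ≤ 2 * M i j := by gcongr
  -- finiteness of RHS
  have hRtop : ∫⁻ ω, ENNReal.ofReal (CRR ω) ∂μ ≠ ⊤ := by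
    rw [hR]
    apply ENNReal.add_ne_top.2
    constructor
    · exact (ENNReal.sum_lt_top.2 fun j _ => ENNReal.ofReal_lt_top).ne
    · refine ENNReal.mul_ne_top (by norm_num) ?_
      refine (ENNReal.sum_lt_top.2 fun i _ => ?_).ne
      refine ENNReal.sum_lt_top.2 fun j _ => ?_
      exact lt_of_le_of_lt (hMinUB i j) ENNReal.ofReal_lt_top
  -- a.e. nonnegativity and measurability of CFTPP, CRR
  have hFnn : 0 ≤ᵐ[μ] CFTPP := by
    filter_upwards [hQnn] with ω hω
    rw [Pi.zero_apply, hCFTPP ω]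
    exact Finset.sum_nonneg fun a _ => Finset.sum_nonneg fun b _ => hω b
  have hRnn : 0 ≤ᵐ[μ] CRR := by
    filter_upwards [hQnn] with ω hω
    rw [Pi.zero_apply, hCRR ω]
    have hB : (0:ℝ) ≤ ∑ i : Fin (n * K), ∑ j ∈ Finset.Ioi i, min (Q i ω) (Q j ω) :=
      Finset.sum_nonneg fun i _ => Finset.sum_nonneg fun j _ => le_min (hω i) (hω j)
    have hA : (0:ℝ) ≤ ∑ j : Fin (n * K), Q j ω := Finset.sum_nonneg fun j _ => hω j
    positivity
  have hFm : AEStronglyMeasurable CFTPP μ := by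
    have : CFTPP = fun ω => ∑ a : Fin (n * K), ∑ b ∈ Finset.Iic a, Q b ω := funext hCFTPP
    rw [this]
    exact (Finset.measurable_sum _ fun a _ =>
      Finset.measurable_sum _ fun b _ => hQm b).aestronglyMeasurable
  have hRm : AEStronglyMeasurable CRR μ := by
    have : CRR = fun ω => (∑ j : Fin (n * K), Q j ω) +
        2 * ∑ i : Fin (n * K), ∑ j ∈ Finset.Ioi i, min (Q i ω) (Q j ω) := funext hCRR
    rw [this]
    exact ((Finset.measurable_sum _ fun j _ => hQm j).add
      ((measurable_const.mul (Finset.measurable_sum _ fun i _ =>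
        Finset.measurable_sum _ fun j _ => (hQm i).min (hQm j))))).aestronglyMeasurable
  rw [integral_eq_lintegral_of_nonneg_ae hFnn hFm, integral_eq_lintegral_of_nonneg_ae hRnn hRm]
  exact ENNReal.toReal_mono hRtop hle
end

section
/- Let H_K = Σ_{k=1}^K 1/k, B_K = Σ_{k=1}^K 1/k², and A_K = Σ_{k=1}^K Σ_{ℓ=1}^{k−1} 1/(k² + ℓ²). Then the sequence (H_K − B_K/2)/(B_K/4 + A_K) converges to 4/π as K → ∞. -/
open Finset Filter

lemma integ_arctan' (c a b : ℝ) (hc : 0 < c) :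
    ∫ x in a..b, 1 / (c ^ 2 + x ^ 2) = (1/c) * (Real.arctan (b/c) - Real.arctan (a/c)) := by
  have h : ∀ x : ℝ, 1 / (c ^ 2 + x ^ 2) = (1/c^2) * (1 / (1 + (x/c)^2)) := by
    intro x
    rw [one_div_mul_one_div]
    congr 1
    field_simp
  simp_rw [h]
  rw [intervalIntegral.integral_const_mul,
    intervalIntegral.integral_comp_div (f := fun y => 1/(1+y^2)) hc.ne',
    integral_one_div_one_add_sq]
  rw [smul_eq_mul]
  field_simp

lemma arctan_le_self'' {x : ℝ} (hx : 0 ≤ x) : Real.arctan x ≤ x := by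
  have h1 : 0 ≤ Real.arctan x := by
    rw [← Real.arctan_zero]
    exact Real.arctan_strictMono.monotone hx
  have h2 := Real.le_tan h1 (Real.arctan_lt_pi_div_two x)
  rwa [Real.tan_arctan] at h2

lemma inner_bounds' (k : ℕ) (hk : 1 ≤ k) :
    Real.pi/4 * (1/(k:ℝ)) - 1/(k:ℝ)^2
      ≤ (∑ l ∈ Finset.Icc 1 (k-1), (1:ℝ)/((k:ℝ)^2+(l:ℝ)^2)) ∧
    (∑ l ∈ Finset.Icc 1 (k-1), (1:ℝ)/((k:ℝ)^2+(l:ℝ)^2)) ≤ Real.pi/4 * (1/(k:ℝ)) := by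
  have hk0 : (0:ℝ) < k := by exact_mod_cast hk
  set f : ℝ → ℝ := fun x => 1/((k:ℝ)^2 + x^2) with hf
  have hanti : ∀ x₀ : ℝ, 0 ≤ x₀ → ∀ a : ℕ, AntitoneOn f (Set.Icc x₀ (x₀ + a)) := by
    intro x₀ hx₀ a x hx y hy hxy
    simp only [hf]
    apply one_div_le_one_div_of_le (by positivity)
    nlinarith [hx.1]
  have hIcc : Finset.Icc 1 (k-1) = Finset.Ico 1 k := by
    rw [← Finset.Ico_add_one_right_eq_Icc]; congr 1; omega
  rw [hIcc, Finset.sum_Ico_eq_sum_range]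
  have hsum : ∀ i : ℕ, (1:ℝ)/((k:ℝ)^2+((1+i:ℕ):ℝ)^2) = f (1 + (i:ℝ)) := by
    intro i; simp only [hf]; push_cast; ring_nf
  constructor
  · -- lower bound
    have hlo := (hanti 1 zero_le_one (k-1)).integral_le_sum
    have hcast : (1:ℝ) + ((k-1:ℕ):ℝ) = (k:ℝ) := by
      rw [Nat.cast_sub hk]; push_cast; ring
    rw [hcast] at hlo
    have hint : ∫ x in (1:ℝ)..(k:ℝ), f x
        = (1/(k:ℝ)) * (Real.arctan ((k:ℝ)/(k:ℝ)) - Real.arctan (1/(k:ℝ))) := by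
      simp only [hf]; exact integ_arctan' _ _ _ hk0
    rw [hint, div_self hk0.ne', Real.arctan_one] at hlo
    have harc : Real.arctan (1/(k:ℝ)) ≤ 1/(k:ℝ) := arctan_le_self'' (by positivity)
    have hmid : Real.pi/4 * (1/(k:ℝ)) - 1/(k:ℝ)^2
        ≤ (1/(k:ℝ)) * (Real.pi/4 - Real.arctan (1/(k:ℝ))) := by
      have h2 : (1/(k:ℝ)) * (1/(k:ℝ)) = 1/(k:ℝ)^2 := by ring
      have h3 := mul_le_mul_of_nonneg_left harc (le_of_lt (one_div_pos.mpr hk0))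
      nlinarith [h3]
    refine le_trans (le_trans hmid hlo) ?_
    apply le_of_eq
    apply Finset.sum_congr rfl
    intro i _
    rw [hsum i]
  · -- upper bound
    have hup := (hanti 0 le_rfl (k-1)).sum_le_integral
    have hstep : (∑ i ∈ Finset.range (k-1), (1:ℝ)/((k:ℝ)^2+((1+i:ℕ):ℝ)^2))
        ≤ ∫ x in (0:ℝ)..((0:ℝ) + ((k-1:ℕ):ℝ)), f x := by
      refine le_trans (le_of_eq ?_) hup
      apply Finset.sum_congr rfl
      intro i _
      rw [hsum i]
      push_cast; ring_nf
    have hint : ∫ x in (0:ℝ)..((0:ℝ) + ((k-1:ℕ):ℝ)), f x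
        = (1/(k:ℝ)) * (Real.arctan (((k-1:ℕ):ℝ)/(k:ℝ)) - Real.arctan ((0:ℝ)/(k:ℝ))) := by
      rw [zero_add]; simp only [hf]; exact integ_arctan' _ _ _ hk0
    rw [hint, zero_div, Real.arctan_zero, sub_zero] at hstep
    refine le_trans hstep ?_
    have harc : Real.arctan (((k-1:ℕ):ℝ)/(k:ℝ)) ≤ Real.pi/4 := by
      rw [← Real.arctan_one]
      apply Real.arctan_strictMono.monotone
      rw [div_le_one hk0, Nat.cast_sub hk]
      push_cast; linarith
    have h3 := mul_le_mul_of_nonneg_left harc (le_of_lt (one_div_pos.mpr hk0))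
    nlinarith [h3]

lemma sq_sum_le' (K : ℕ) : (∑ k ∈ Finset.Icc 1 K, (1:ℝ)/(k:ℝ)^2) ≤ 2 := by
  have h : ∀ n : ℕ, (∑ k ∈ Finset.Icc 1 (n+1), (1:ℝ)/(k:ℝ)^2) ≤ 2 - 1/((n:ℝ)+1) := by
    intro n
    induction n with
    | zero => norm_num
    | succ m ih =>
      rw [Finset.sum_Icc_succ_top (by omega)]
      have key : (1:ℝ)/((m+1+1:ℕ):ℝ)^2 ≤ 1/((m:ℝ)+1) - 1/((m:ℝ)+2) := by
        push_cast
        rw [div_sub_div _ _ (by positivity) (by positivity),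
          div_le_div_iff₀ (by positivity) (by positivity)]
        nlinarith [sq_nonneg ((m:ℝ)+1)]
      push_cast at ih key ⊢
      have h22 : (1:ℝ)/((m:ℝ)+2) = 1/((m:ℝ)+1+1) := by ring_nf
      linarith
  cases K with
  | zero => simp
  | succ n =>
    refine le_trans (h n) ?_
    have h2 : (0:ℝ) ≤ 1/((n:ℝ)+1) := by positivity
    linarith

/-- `(H_K - B_K/2)/(B_K/4 + A_K) → 4/π` as `K → ∞`, where `H_K` is the harmonic
number, `B_K = Σ_{k≤K} 1/k²` and `A_K = Σ_{k≤K} Σ_{ℓ<k} 1/(k²+ℓ²)`. -/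
theorem stmt_8
    (H B A : ℕ → ℝ)
    (hH : ∀ K, H K = ∑ k ∈ Finset.Icc 1 K, (1 : ℝ) / k)
    (hB : ∀ K, B K = ∑ k ∈ Finset.Icc 1 K, (1 : ℝ) / (k : ℝ) ^ 2)
    (hA : ∀ K, A K = ∑ k ∈ Finset.Icc 1 K, ∑ l ∈ Finset.Icc 1 (k - 1),
      (1 : ℝ) / ((k : ℝ) ^ 2 + (l : ℝ) ^ 2)) :
    Tendsto (fun K => (H K - B K / 2) / (B K / 4 + A K)) atTop
      (nhds (4 / Real.pi)) := by
  have hpi := Real.pi_pos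
  have hBnonneg : ∀ K, 0 ≤ B K := by
    intro K; rw [hB]; positivity
  have hBle : ∀ K, B K ≤ 2 := fun K => by rw [hB]; exact sq_sum_le' K
  have hEbound : ∀ K, |B K / 4 + A K - Real.pi/4 * H K| ≤ 4 := by
    intro K
    have hEeq : B K / 4 + A K - Real.pi/4 * H K
        = ∑ k ∈ Finset.Icc 1 K, ((1:ℝ)/(k:ℝ)^2/4
            + (∑ l ∈ Finset.Icc 1 (k-1), (1:ℝ)/((k:ℝ)^2+(l:ℝ)^2))
            - Real.pi/4 * (1/(k:ℝ))) := by
      rw [hB, hA, hH, Finset.sum_div, Finset.mul_sum, ← Finset.sum_add_distrib,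
        ← Finset.sum_sub_distrib]
    rw [hEeq]
    refine le_trans (Finset.abs_sum_le_sum_abs _ _) ?_
    have step : ∀ k ∈ Finset.Icc 1 K,
        |(1:ℝ)/(k:ℝ)^2/4
            + (∑ l ∈ Finset.Icc 1 (k-1), (1:ℝ)/((k:ℝ)^2+(l:ℝ)^2))
            - Real.pi/4 * (1/(k:ℝ))| ≤ 2 * ((1:ℝ)/(k:ℝ)^2) := by
      intro k hk
      obtain ⟨hk1, -⟩ := Finset.mem_Icc.mp hk
      obtain ⟨hlo, hup⟩ := inner_bounds' k hk1
      have hk0 : (0:ℝ) < (k:ℝ)^2 := by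
        have : (0:ℝ) < (k:ℝ) := by exact_mod_cast hk1
        positivity
      have hpos : (0:ℝ) < 1/(k:ℝ)^2 := one_div_pos.mpr hk0
      rw [abs_le]
      constructor <;> nlinarith
    refine le_trans (Finset.sum_le_sum step) ?_
    rw [← Finset.mul_sum]
    have := sq_sum_le' K
    linarith
  have hHeq : ∀ K, H K = ∑ i ∈ Finset.range K, (1:ℝ)/((i:ℝ)+1) := by
    intro K
    rw [hH, ← Finset.Ico_add_one_right_eq_Icc, Finset.sum_Ico_eq_sum_range]
    apply Finset.sum_congr rfl
    intro i _
    push_cast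
    ring_nf
  have hHtop : Tendsto H atTop atTop :=
    Real.tendsto_sum_range_one_div_nat_succ_atTop.congr (fun K => (hHeq K).symm)
  have hev : ∀ᶠ K in atTop, (1:ℝ) ≤ H K := hHtop.eventually_ge_atTop 1
  have h1 : Tendsto (fun K => B K / 2 / H K) atTop (nhds 0) := by
    apply squeeze_zero_norm' ?_ (Tendsto.const_div_atTop hHtop 2)
    filter_upwards [hev] with K hK
    rw [Real.norm_eq_abs, abs_div, abs_of_nonneg (by linarith [hBnonneg K] : (0:ℝ) ≤ B K / 2),
      abs_of_nonneg (by linarith : (0:ℝ) ≤ H K)]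
    gcongr
    linarith [hBle K]
  have h2 : Tendsto (fun K => (B K / 4 + A K - Real.pi/4 * H K) / H K) atTop (nhds 0) := by
    apply squeeze_zero_norm' ?_ (Tendsto.const_div_atTop hHtop 4)
    filter_upwards [hev] with K hK
    rw [Real.norm_eq_abs, abs_div, abs_of_nonneg (by linarith : (0:ℝ) ≤ H K)]
    gcongr
    exact hEbound K
  have hnum : Tendsto (fun K => 1 - B K / 2 / H K) atTop (nhds 1) := by
    simpa using tendsto_const_nhds.sub h1
  have hden : Tendsto (fun K => Real.pi/4 + (B K / 4 + A K - Real.pi/4 * H K) / H K)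
      atTop (nhds (Real.pi/4)) := by
    simpa using tendsto_const_nhds.add h2
  have hmain := hnum.div hden (by positivity : Real.pi/4 ≠ 0)
  rw [show (1:ℝ)/(Real.pi/4) = 4/Real.pi from one_div_div Real.pi 4] at hmain
  refine hmain.congr' ?_
  filter_upwards [hev] with K hK
  have hH0 : H K ≠ 0 := by intro h; rw [h] at hK; linarith
  have e1 : 1 - B K / 2 / H K = (H K - B K / 2) / H K := by
    field_simp
  have e2 : Real.pi/4 + (B K / 4 + A K - Real.pi/4 * H K) / H K = (B K / 4 + A K) / H K := by
    field_simp
    ring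
  simp only [Pi.div_apply]
  rw [e1, e2, div_div_div_cancel_right₀ hH0]
end
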